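/- arXiv:2304.14262 — 6 statements merged into one kernel-verified Lean document; each statement's English description precedes it below -/
import Mathlib

section
/- Structure of preferred bundles for truncated additive valuations: for every buyer j and price vector p, a bundle y for j belongs to the demand set D_j(p) if and only if y i = b i for every i ∈ Ω'_j(p), ∑_{i∈Ω''_j(p)} y i = d''_j(p), and y i = 0 for every object i outside Ω'_j(p) ∪ Ω''_j(p) ∪ Ω'''_j(p). -/
open Finset

section MarketDefs

variable {Ω N : Type*}

/-- A bundle for a buyer with demand `dj`: at most `b i` copies of each object,
at most `dj` items in total. -/
def IsBundle [Fintype Ω] (b : Ω → ℕ) (dj : ℕ) (y : Ω → ℕ) : Prop :=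
  (∀ i, y i ≤ b i) ∧ ∑ i, y i ≤ dj

/-- Utility of bundle `y` at prices `p` for a buyer with per-unit valuations `v`. -/
noncomputable def utility [Fintype Ω] (v : Ω → ℕ) (p : Ω → ℝ) (y : Ω → ℕ) : ℝ :=
  ∑ i, ((v i : ℝ) - p i) * (y i : ℝ)

/-- `y` is a preferred bundle (member of the demand set `D_j(p)`). -/
def InDemand [Fintype Ω] (b : Ω → ℕ) (dj : ℕ) (v : Ω → ℕ) (p : Ω → ℝ) (y : Ω → ℕ) : Prop :=
  IsBundle b dj y ∧ ∀ z, IsBundle b dj z → utility v p z ≤ utility v p y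

/-- Feasible allocation. -/
def Feasible [Fintype Ω] [Fintype N] (b : Ω → ℕ) (d : N → ℕ) (x : Ω → N → ℕ) : Prop :=
  (∀ i, ∑ j, x i j ≤ b i) ∧ ∀ j, ∑ i, x i j ≤ d j

/-- Stable allocation at prices `p`: feasible, and every buyer gets a preferred bundle. -/
def Stable [Fintype Ω] [Fintype N] (b : Ω → ℕ) (d : N → ℕ) (v : Ω → N → ℕ)
    (p : Ω → ℝ) (x : Ω → N → ℕ) : Prop :=
  Feasible b d x ∧ ∀ j, InDemand b (d j) (fun i => v i j) p (fun i => x i j)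

/-- Competitive price vector: nonnegative, and some allocation is stable for it. -/
def Competitive [Fintype Ω] [Fintype N] (b : Ω → ℕ) (d : N → ℕ) (v : Ω → N → ℕ)
    (p : Ω → ℝ) : Prop :=
  (∀ i, 0 ≤ p i) ∧ ∃ x, Stable b d v p x

/-- Walrasian price vector: some stable allocation sells as much as possible. -/
def Walrasian [Fintype Ω] [Fintype N] (b : Ω → ℕ) (d : N → ℕ) (v : Ω → N → ℕ)
    (p : Ω → ℝ) : Prop :=
  (∀ i, 0 ≤ p i) ∧ ∃ x, Stable b d v p x ∧
    ∑ i, ∑ j, x i j = min (∑ i, b i) (∑ j, d j)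

/-- Componentwise minimum Walrasian price vector. -/
def MinWalrasian [Fintype Ω] [Fintype N] (b : Ω → ℕ) (d : N → ℕ) (v : Ω → N → ℕ)
    (p : Ω → ℝ) : Prop :=
  Walrasian b d v p ∧ ∀ q, Walrasian b d v q → ∀ i, p i ≤ q i

end MarketDefs

section TierDefs

variable {Ω N : Type*}

/-- The set `P` of positive payoffs `u i`. -/
noncomputable def posPayoffs [Fintype Ω] (u : Ω → ℝ) : Finset ℝ :=
  (Finset.univ.image u).filter (fun t => 0 < t)

/-- The threshold payoff `θ_j(p)`: the largest positive payoff value `t` such that the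
supply of items with payoff at least `t` covers the demand, if it exists; otherwise the
minimum positive payoff value (and junk value `0` if there is no positive payoff). -/
noncomputable def theta [Fintype Ω] (b : Ω → ℕ) (dj : ℕ) (u : Ω → ℝ) : ℝ :=
  if hQ : ((posPayoffs u).filter
      (fun t => dj ≤ ∑ i ∈ Finset.univ.filter (fun i => t ≤ u i), b i)).Nonempty then
    ((posPayoffs u).filter
      (fun t => dj ≤ ∑ i ∈ Finset.univ.filter (fun i => t ≤ u i), b i)).max' hQ
  else if hP : (posPayoffs u).Nonempty then (posPayoffs u).min' hP
  else 0

/-- `Ω'_j(p)`: objects with payoff strictly above the threshold. -/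
noncomputable def OmegaP [Fintype Ω] (b : Ω → ℕ) (dj : ℕ) (u : Ω → ℝ) : Finset Ω :=
  if dj = 0 ∨ posPayoffs u = ∅ then ∅
  else Finset.univ.filter (fun i => theta b dj u < u i)

/-- `Ω''_j(p)`: objects with payoff equal to the threshold. -/
noncomputable def OmegaPP [Fintype Ω] (b : Ω → ℕ) (dj : ℕ) (u : Ω → ℝ) : Finset Ω :=
  if dj = 0 ∨ posPayoffs u = ∅ then ∅
  else Finset.univ.filter (fun i => u i = theta b dj u)

/-- `Ω'''_j(p)`: objects with payoff zero. -/
noncomputable def OmegaPPP [Fintype Ω] (u : Ω → ℝ) : Finset Ω :=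
  Finset.univ.filter (fun i => u i = 0)

/-- `d'_j(p)`. -/
noncomputable def dPr [Fintype Ω] (b : Ω → ℕ) (dj : ℕ) (u : Ω → ℝ) : ℕ :=
  ∑ i ∈ OmegaP b dj u, b i

/-- `d''_j(p)`. -/
noncomputable def dPPr [Fintype Ω] (b : Ω → ℕ) (dj : ℕ) (u : Ω → ℝ) : ℕ :=
  min (∑ i ∈ OmegaPP b dj u, b i) (dj - dPr b dj u)

/-- Payoff function of buyer `j` at prices `p`. -/
noncomputable def payoff (v : Ω → N → ℕ) (p : Ω → ℝ) (j : N) (i : Ω) : ℝ :=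
  (v i j : ℝ) - p i

/-- `d_p(I)`: total demand that must be served from the item set `I`
(here `a - b` is truncated subtraction on `ℕ`, i.e. `max (0, a - b)`). -/
noncomputable def overDemand [Fintype Ω] [Fintype N] [DecidableEq Ω] (b : Ω → ℕ)
    (d : N → ℕ) (v : Ω → N → ℕ) (p : Ω → ℝ) (I : Finset Ω) : ℕ :=
  ∑ j : N,
    ((∑ i ∈ OmegaP b (d j) (payoff v p j) ∩ I, b i) +
      (dPPr b (d j) (payoff v p j) -
        ∑ i ∈ OmegaPP b (d j) (payoff v p j) \ I, min (b i) (dPPr b (d j) (payoff v p j))))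

end TierDefs

section AuxLemmas

variable {Ω : Type*} [Fintype Ω]

lemma mem_posPayoffs {u : Ω → ℝ} {t : ℝ} :
    t ∈ posPayoffs u ↔ (∃ i, u i = t) ∧ 0 < t := by
  simp [posPayoffs]

lemma theta_mem_posPayoffs (b : Ω → ℕ) (dj : ℕ) {u : Ω → ℝ}
    (hP : (posPayoffs u).Nonempty) : theta b dj u ∈ posPayoffs u := by
  unfold theta
  split_ifs with hQ
  · exact Finset.filter_subset _ _ (Finset.max'_mem _ hQ)
  · exact Finset.min'_mem _ hP

lemma theta_pos (b : Ω → ℕ) (dj : ℕ) {u : Ω → ℝ}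
    (hP : (posPayoffs u).Nonempty) : 0 < theta b dj u :=
  (mem_posPayoffs.mp (theta_mem_posPayoffs b dj hP)).2

/-- splitting a weak-inequality filter sum -/
lemma sum_split (b : Ω → ℕ) (u : Ω → ℝ) (t : ℝ) :
    ∑ i ∈ Finset.univ.filter (fun i => t ≤ u i), b i =
      ∑ i ∈ Finset.univ.filter (fun i => t < u i), b i +
      ∑ i ∈ Finset.univ.filter (fun i => u i = t), b i := by
  classical
  rw [Finset.sum_filter, Finset.sum_filter, Finset.sum_filter, ← Finset.sum_add_distrib]
  apply Finset.sum_congr rfl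
  intro i _
  rcases lt_trichotomy (u i) t with h | h | h
  · rw [if_neg (not_le_of_gt h), if_neg (not_lt_of_gt h), if_neg (ne_of_lt h)]
    simp
  · simp [h]
  · simp [le_of_lt h, h, (ne_of_gt h)]

lemma dPr_lt_dj (b : Ω → ℕ) (dj : ℕ) {u : Ω → ℝ}
    (hd : dj ≠ 0) (hP : (posPayoffs u).Nonempty) :
    ∑ i ∈ Finset.univ.filter (fun i => theta b dj u < u i), b i < dj := by
  classical
  by_contra h
  push_neg at h
  set θ := theta b dj u with hθ
  have hS : (Finset.univ.filter (fun i => θ < u i)).Nonempty := by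
    by_contra hS
    rw [Finset.not_nonempty_iff_eq_empty] at hS
    rw [hS] at h
    simp at h
    omega
  obtain ⟨i0, hi0⟩ := hS
  rw [Finset.mem_filter] at hi0
  have hθpos : 0 < θ := theta_pos b dj hP
  have hT : ((posPayoffs u).filter (fun t => θ < t)).Nonempty := by
    refine ⟨u i0, Finset.mem_filter.mpr ⟨mem_posPayoffs.mpr ⟨⟨i0, rfl⟩, hθpos.trans hi0.2⟩, hi0.2⟩⟩
  set t' := ((posPayoffs u).filter (fun t => θ < t)).min' hT with ht'
  have ht'mem := Finset.min'_mem _ hT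
  rw [Finset.mem_filter] at ht'mem
  have ht'Q : t' ∈ (posPayoffs u).filter
      (fun t => dj ≤ ∑ i ∈ Finset.univ.filter (fun i => t ≤ u i), b i) := by
    refine Finset.mem_filter.mpr ⟨ht'mem.1, le_trans h ?_⟩
    apply Finset.sum_le_sum_of_subset
    intro i hi
    rw [Finset.mem_filter] at hi ⊢
    refine ⟨hi.1, ?_⟩
    exact Finset.min'_le _ _ (Finset.mem_filter.mpr
      ⟨mem_posPayoffs.mpr ⟨⟨i, rfl⟩, hθpos.trans hi.2⟩, hi.2⟩)
  have hQne : ((posPayoffs u).filter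
      (fun t => dj ≤ ∑ i ∈ Finset.univ.filter (fun i => t ≤ u i), b i)).Nonempty := ⟨t', ht'Q⟩
  have hθmax : θ = ((posPayoffs u).filter
      (fun t => dj ≤ ∑ i ∈ Finset.univ.filter (fun i => t ≤ u i), b i)).max' hQne := by
    rw [hθ]
    unfold theta
    rw [dif_pos hQne]
  have : t' ≤ θ := hθmax ▸ Finset.le_max' _ _ ht'Q
  exact absurd this (not_le_of_gt ht'mem.2)

lemma theta_min (b : Ω → ℕ) (dj : ℕ) {u : Ω → ℝ}
    (hP : (posPayoffs u).Nonempty)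
    (hB : ¬ dj ≤ ∑ i ∈ Finset.univ.filter (fun i => theta b dj u ≤ u i), b i) :
    ∀ i, 0 < u i → theta b dj u ≤ u i := by
  classical
  have hQ : ¬ ((posPayoffs u).filter
      (fun t => dj ≤ ∑ i ∈ Finset.univ.filter (fun i => t ≤ u i), b i)).Nonempty := by
    intro hQne
    apply hB
    have hθmax : theta b dj u = ((posPayoffs u).filter
        (fun t => dj ≤ ∑ i ∈ Finset.univ.filter (fun i => t ≤ u i), b i)).max' hQne := by
      unfold theta; rw [dif_pos hQne]
    have := Finset.max'_mem _ hQne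
    rw [← hθmax] at this
    exact (Finset.mem_filter.mp this).2
  have hθmin : theta b dj u = (posPayoffs u).min' hP := by
    unfold theta; rw [dif_neg hQ, dif_pos hP]
  intro i hi
  rw [hθmin]
  exact Finset.min'_le _ _ (mem_posPayoffs.mpr ⟨⟨i, rfl⟩, hi⟩)

/-- greedy fill lemma -/
lemma fill_exists [DecidableEq Ω] (s : Finset Ω) (b : Ω → ℕ) (m : ℕ) (hm : m ≤ ∑ i ∈ s, b i) :
    ∃ f : Ω → ℕ, (∀ i, f i ≤ b i) ∧ (∀ i ∉ s, f i = 0) ∧ ∑ i ∈ s, f i = m := by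
  induction s using Finset.induction_on generalizing m with
  | empty =>
    simp only [Finset.sum_empty, Nat.le_zero] at hm
    exact ⟨fun _ => 0, fun _ => Nat.zero_le _, fun _ _ => rfl, by simp [hm]⟩
  | insert a s ha ih =>
    rw [Finset.sum_insert ha] at hm
    obtain ⟨g, hg1, hg2, hg3⟩ := ih (m - min m (b a)) (by omega)
    refine ⟨Function.update g a (min m (b a)), ?_, ?_, ?_⟩
    · intro i
      by_cases hia : i = a
      · subst hia; rw [Function.update_self]; omega
      · rw [Function.update_of_ne hia]; exact hg1 i
    · intro i hi
      rw [Finset.mem_insert] at hi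
      push_neg at hi
      rw [Function.update_of_ne hi.1]
      exact hg2 i hi.2
    · rw [Finset.sum_insert ha, Function.update_self]
      have : ∑ i ∈ s, Function.update g a (min m (b a)) i = ∑ i ∈ s, g i := by
        apply Finset.sum_congr rfl
        intro i hi
        have : i ≠ a := by rintro rfl; exact ha hi
        exact Function.update_of_ne this _ _
      rw [this, hg3]
      omega

end AuxLemmas

/-- structure of preferred bundles for truncated additive valuations. -/
theorem preferred_bundle_structure
    {Ω N : Type*} [Fintype Ω] [DecidableEq Ω]
    (b : Ω → ℕ) (d : N → ℕ) (v : Ω → N → ℕ)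
    (p : Ω → ℝ) (hp : ∀ i, 0 ≤ p i)
    (j : N) (y : Ω → ℕ) (hy : IsBundle b (d j) y) :
    InDemand b (d j) (fun i => v i j) p y ↔
      ((∀ i ∈ OmegaP b (d j) (payoff v p j), y i = b i) ∧
        (∑ i ∈ OmegaPP b (d j) (payoff v p j), y i = dPPr b (d j) (payoff v p j)) ∧
        (∀ i, i ∉ OmegaP b (d j) (payoff v p j) ∪ OmegaPP b (d j) (payoff v p j) ∪
            OmegaPPP (payoff v p j) → y i = 0)) := by
  set u := payoff v p j with hu
  have hutil : ∀ z : Ω → ℕ, utility (fun i => v i j) p z = ∑ i, u i * (z i : ℝ) := by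
    intro z; simp [utility, hu, payoff]
  have hS3 : ∀ i : Ω, i ∈ OmegaPPP u ↔ u i = 0 := by
    intro i; simp [OmegaPPP]
  by_cases hc : d j = 0 ∨ posPayoffs u = ∅
  · -- degenerate case
    have hP0 : OmegaP b (d j) u = ∅ := by rw [OmegaP, if_pos hc]
    have hPP0 : OmegaPP b (d j) u = ∅ := by rw [OmegaPP, if_pos hc]
    have hdpp : dPPr b (d j) u = 0 := by
      rw [dPPr, hPP0]; simp [dPr]
    rw [hP0, hPP0, hdpp]
    simp only [Finset.notMem_empty, false_implies, implies_true, true_and,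
      Finset.sum_empty, Finset.empty_union, Nat.cast_zero]
    rcases hc with hd0 | hPe
    · -- d j = 0 : y must be zero
      have hzero : ∀ z : Ω → ℕ, IsBundle b (d j) z → ∀ i, z i = 0 := by
        intro z hz i
        have h0 : ∑ i, z i = 0 := Nat.le_zero.mp (hd0 ▸ hz.2)
        exact (Finset.sum_eq_zero_iff.mp h0) i (Finset.mem_univ i)
      constructor
      · exact fun _ i _ => hzero y hy i
      · intro _
        refine ⟨hy, fun z hz => ?_⟩
        rw [hutil, hutil]
        have h1 : ∀ i, z i = 0 := hzero z hz
        have h2 : ∀ i, y i = 0 := hzero y hy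
        simp [h1, h2]
    · -- no positive payoff
      have hup : ∀ i, u i ≤ 0 := by
        intro i
        by_contra h
        push_neg at h
        have : u i ∈ posPayoffs u := mem_posPayoffs.mpr ⟨⟨i, rfl⟩, h⟩
        rw [hPe] at this
        exact absurd this (Finset.notMem_empty _)
      constructor
      · rintro ⟨_, hopt⟩
        intro i hi
        have h0 : (0:ℝ) ≤ ∑ i, u i * (y i : ℝ) := by
          have := hopt (fun _ => 0) ⟨fun i => Nat.zero_le _, by simp⟩
          rw [hutil, hutil] at this
          simpa using this
        have hle : ∑ i, u i * (y i : ℝ) ≤ 0 := by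
          apply Finset.sum_nonpos
          intro i _
          exact mul_nonpos_of_nonpos_of_nonneg (hup i) (Nat.cast_nonneg _)
        have heq0 : ∑ i, u i * (y i : ℝ) = 0 := le_antisymm hle h0
        have hterm := (Finset.sum_eq_zero_iff_of_nonpos
          (fun i _ => mul_nonpos_of_nonpos_of_nonneg (hup i) (Nat.cast_nonneg (y i)))).mp heq0
        have := hterm i (Finset.mem_univ i)
        rcases mul_eq_zero.mp this with h | h
        · exact absurd h ((hS3 i).not.mp hi)
        · exact_mod_cast h
      · intro hz0
        refine ⟨hy, fun z hz => ?_⟩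
        rw [hutil, hutil]
        have hy0 : ∑ i, u i * (y i : ℝ) = 0 := by
          apply Finset.sum_eq_zero
          intro i _
          by_cases h : i ∈ OmegaPPP u
          · rw [(hS3 i).mp h]; ring
          · rw [hz0 i h]; simp
        rw [hy0]
        apply Finset.sum_nonpos
        intro i _
        exact mul_nonpos_of_nonpos_of_nonneg (hup i) (Nat.cast_nonneg _)
  · -- main case
    have hc' := hc
    push_neg at hc'
    obtain ⟨hd, hPe⟩ := hc'
    have hP : (posPayoffs u).Nonempty := hPe
    set θ := theta b (d j) u with hθdef
    have hθpos : 0 < θ := theta_pos b (d j) hP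
    set S' := Finset.univ.filter (fun i => θ < u i) with hS'def
    set S'' := Finset.univ.filter (fun i => u i = θ) with hS''def
    have hOP : OmegaP b (d j) u = S' := by rw [OmegaP, if_neg hc]
    have hOPP : OmegaPP b (d j) u = S'' := by rw [OmegaPP, if_neg hc]
    have hmemS' : ∀ i : Ω, i ∈ S' ↔ θ < u i := by intro i; simp [hS'def]
    have hmemS'' : ∀ i : Ω, i ∈ S'' ↔ u i = θ := by intro i; simp [hS''def]
    have hdisj : Disjoint S' S'' := by
      rw [Finset.disjoint_left]
      intro i hi hi'
      exact absurd ((hmemS'' i).mp hi') (ne_of_gt ((hmemS' i).mp hi))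
    have hd' : ∑ i ∈ S', b i < d j := dPr_lt_dj b (d j) hd hP
    have hsplit : ∑ i ∈ Finset.univ.filter (fun i => θ ≤ u i), b i =
        ∑ i ∈ S', b i + ∑ i ∈ S'', b i := sum_split b u θ
    set D2 := dPPr b (d j) u with hD2def
    have hdPPr : D2 = min (∑ i ∈ S'', b i) (d j - ∑ i ∈ S', b i) := by
      rw [hD2def, dPPr, dPr, hOP, hOPP]
    set Ustar : ℝ := ∑ i ∈ S', u i * (b i : ℝ) + θ * (D2 : ℝ) with hUstar
    -- the main characterization
    have hEQ : ∀ z : Ω → ℕ, (∀ i ∈ S', z i = b i) → (∑ i ∈ S'', z i = D2) →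
        (∀ i, i ∉ S' ∪ S'' ∪ OmegaPPP u → z i = 0) →
        ∑ i, u i * (z i : ℝ) = Ustar := by
      intro z h1 h2 h3
      have hsub : ∑ i, u i * (z i : ℝ) = ∑ i ∈ S' ∪ S'', u i * (z i : ℝ) := by
        symm
        apply Finset.sum_subset (Finset.subset_univ _)
        intro i _ hi
        by_cases hin : i ∈ OmegaPPP u
        · rw [(hS3 i).mp hin]; ring
        · rw [h3 i (by
            intro hmem
            rcases Finset.mem_union.mp hmem with h | h
            · exact hi h
            · exact hin h)]
          simp
      rw [hsub, Finset.sum_union hdisj]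
      have e1 : ∑ i ∈ S', u i * (z i : ℝ) = ∑ i ∈ S', u i * (b i : ℝ) :=
        Finset.sum_congr rfl (fun i hi => by rw [h1 i hi])
      have e2 : ∑ i ∈ S'', u i * (z i : ℝ) = θ * (D2 : ℝ) := by
        have : ∀ i ∈ S'', u i * (z i : ℝ) = θ * (z i : ℝ) :=
          fun i hi => by rw [(hmemS'' i).mp hi]
        rw [Finset.sum_congr rfl this, ← Finset.mul_sum, ← Nat.cast_sum, h2]
      rw [e1, e2, hUstar]
    have hmain : (∀ z : Ω → ℕ, IsBundle b (d j) z → ∑ i, u i * (z i : ℝ) ≤ Ustar) ∧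
        (∀ z : Ω → ℕ, IsBundle b (d j) z → ∑ i, u i * (z i : ℝ) = Ustar →
          (∀ i ∈ S', z i = b i) ∧ (∑ i ∈ S'', z i = D2) ∧
          (∀ i, i ∉ S' ∪ S'' ∪ OmegaPPP u → z i = 0)) := by
      by_cases hA : d j ≤ ∑ i ∈ Finset.univ.filter (fun i => θ ≤ u i), b i
      · -- case A
        rw [hsplit] at hA
        have hD2A : D2 = d j - ∑ i ∈ S', b i := by rw [hdPPr]; omega
        have hD2cast : (D2 : ℝ) = (d j : ℝ) - ((∑ i ∈ S', b i : ℕ) : ℝ) := by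
          rw [hD2A, Nat.cast_sub (le_of_lt hd')]
        have hkey : ∀ z : Ω → ℕ, ∑ i, u i * (z i : ℝ) =
            (∑ i ∈ S', (u i - θ) * (z i : ℝ)) + (∑ i ∈ S'ᶜ, (u i - θ) * (z i : ℝ)) +
              θ * ((∑ i, z i : ℕ) : ℝ) := by
          intro z
          rw [Finset.sum_add_sum_compl, Nat.cast_sum, Finset.mul_sum, ← Finset.sum_add_distrib]
          exact Finset.sum_congr rfl (fun i _ => by ring)
        have hUstarA : Ustar = (∑ i ∈ S', (u i - θ) * (b i : ℝ)) + θ * (d j : ℝ) := by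
          rw [hUstar, hD2cast]
          have : ∑ i ∈ S', (u i - θ) * (b i : ℝ) =
              ∑ i ∈ S', u i * (b i : ℝ) - θ * ((∑ i ∈ S', b i : ℕ) : ℝ) := by
            rw [Nat.cast_sum, Finset.mul_sum, ← Finset.sum_sub_distrib]
            exact Finset.sum_congr rfl (fun i _ => by ring)
          rw [this]; ring
        have ht1 : ∀ z : Ω → ℕ, (∀ i, z i ≤ b i) →
            ∑ i ∈ S', (u i - θ) * (z i : ℝ) ≤ ∑ i ∈ S', (u i - θ) * (b i : ℝ) := by
          intro z hzb
          apply Finset.sum_le_sum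
          intro i hi
          have : θ ≤ u i := le_of_lt ((hmemS' i).mp hi)
          exact mul_le_mul_of_nonneg_left (Nat.cast_le.mpr (hzb i)) (by linarith)
        have ht2 : ∀ z : Ω → ℕ, ∑ i ∈ S'ᶜ, (u i - θ) * (z i : ℝ) ≤ 0 := by
          intro z
          apply Finset.sum_nonpos
          intro i hi
          have : ¬ θ < u i := by
            intro h
            exact (Finset.mem_compl.mp hi) ((hmemS' i).mpr h)
          exact mul_nonpos_of_nonpos_of_nonneg (by linarith [not_lt.mp this]) (Nat.cast_nonneg _)
        have ht3 : ∀ z : Ω → ℕ, (∑ i, z i ≤ d j) →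
            θ * ((∑ i, z i : ℕ) : ℝ) ≤ θ * (d j : ℝ) :=
          fun z hz => mul_le_mul_of_nonneg_left (Nat.cast_le.mpr hz) (le_of_lt hθpos)
        constructor
        · intro z hz
          rw [hkey z, hUstarA]
          have := ht1 z hz.1
          have := ht2 z
          have := ht3 z hz.2
          linarith
        · intro z hz heq
          rw [hkey z, hUstarA] at heq
          have h1 := ht1 z hz.1
          have h2 := ht2 z
          have h3 := ht3 z hz.2
          have e1 : ∑ i ∈ S', (u i - θ) * (z i : ℝ) = ∑ i ∈ S', (u i - θ) * (b i : ℝ) := by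
            linarith
          have e2 : ∑ i ∈ S'ᶜ, (u i - θ) * (z i : ℝ) = 0 := by linarith
          have e3 : ((∑ i, z i : ℕ) : ℝ) = (d j : ℝ) := by
            have : θ * ((∑ i, z i : ℕ) : ℝ) = θ * (d j : ℝ) := by linarith
            exact mul_left_cancel₀ (ne_of_gt hθpos) this
          have hsumz : ∑ i, z i = d j := Nat.cast_injective e3
          -- z = b on S'
          have hc1 : ∀ i ∈ S', z i = b i := by
            have hzero : ∑ i ∈ S', ((u i - θ) * (b i : ℝ) - (u i - θ) * (z i : ℝ)) = 0 := by
              rw [Finset.sum_sub_distrib]; linarith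
            have hterm := (Finset.sum_eq_zero_iff_of_nonneg (fun i hi => by
              have hθu : θ ≤ u i := le_of_lt ((hmemS' i).mp hi)
              have hzb : (z i : ℝ) ≤ (b i : ℝ) := Nat.cast_le.mpr (hz.1 i)
              have := mul_nonneg (sub_nonneg.mpr hθu) (sub_nonneg.mpr hzb)
              nlinarith)).mp hzero
            intro i hi
            have := hterm i hi
            have hlt : θ < u i := (hmemS' i).mp hi
            have : (u i - θ) * ((b i : ℝ) - (z i : ℝ)) = 0 := by linarith [this]
            rcases mul_eq_zero.mp this with h | h
            · linarith
            · have : (b i : ℝ) = (z i : ℝ) := by linarith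
              exact (Nat.cast_injective this).symm
          -- z = 0 strictly below threshold
          have hc3' : ∀ i, u i < θ → z i = 0 := by
            have hzero : ∑ i ∈ S'ᶜ, (θ - u i) * (z i : ℝ) = 0 := by
              have : ∑ i ∈ S'ᶜ, (θ - u i) * (z i : ℝ) =
                  -∑ i ∈ S'ᶜ, (u i - θ) * (z i : ℝ) := by
                rw [← Finset.sum_neg_distrib]
                exact Finset.sum_congr rfl (fun i _ => by ring)
              rw [this, e2, neg_zero]
            have hterm := (Finset.sum_eq_zero_iff_of_nonneg (fun i hi => by
              have h1 : ¬ θ < u i := fun h => (Finset.mem_compl.mp hi) ((hmemS' i).mpr h)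
              have h2 := not_lt.mp h1
              exact mul_nonneg (by linarith) (Nat.cast_nonneg _))).mp hzero
            intro i hilt
            have hiS : i ∈ S'ᶜ := Finset.mem_compl.mpr (fun h => absurd ((hmemS' i).mp h)
              (not_lt.mpr (le_of_lt hilt)))
            have := hterm i hiS
            rcases mul_eq_zero.mp this with h | h
            · linarith
            · exact_mod_cast h
          refine ⟨hc1, ?_, ?_⟩
          · -- sum over S''
            have hcompl0 : ∑ i ∈ (S' ∪ S'')ᶜ, z i = 0 := by
              apply Finset.sum_eq_zero
              intro i hi
              rw [Finset.mem_compl, Finset.mem_union] at hi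
              push_neg at hi
              have h1 : ¬ θ < u i := fun h => hi.1 ((hmemS' i).mpr h)
              have h2 : u i ≠ θ := fun h => hi.2 ((hmemS'' i).mpr h)
              exact hc3' i (lt_of_le_of_ne (not_lt.mp h1) h2)
            have : ∑ i ∈ S' ∪ S'', z i + ∑ i ∈ (S' ∪ S'')ᶜ, z i = ∑ i, z i :=
              Finset.sum_add_sum_compl _ _
            rw [hcompl0, Finset.sum_union hdisj, hsumz] at this
            have hS'z : ∑ i ∈ S', z i = ∑ i ∈ S', b i :=
              Finset.sum_congr rfl hc1
            rw [hS'z] at this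
            omega
          · intro i hi
            rw [Finset.mem_union, Finset.mem_union] at hi
            push_neg at hi
            have h1 : ¬ θ < u i := fun h => hi.1.1 ((hmemS' i).mpr h)
            have h2 : u i ≠ θ := fun h => hi.1.2 ((hmemS'' i).mpr h)
            exact hc3' i (lt_of_le_of_ne (not_lt.mp h1) h2)
      · -- case B
        have hmin : ∀ i, 0 < u i → θ ≤ u i := theta_min b (d j) hP hA
        rw [hsplit] at hA
        push_neg at hA
        have hD2B : D2 = ∑ i ∈ S'', b i := by rw [hdPPr]; omega
        have hposU : ∀ i ∈ S' ∪ S'', 0 < u i := by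
          intro i hi
          rcases Finset.mem_union.mp hi with h | h
          · exact lt_trans hθpos ((hmemS' i).mp h)
          · rw [(hmemS'' i).mp h]; exact hθpos
        have hnegU : ∀ i ∈ (S' ∪ S'')ᶜ, u i ≤ 0 := by
          intro i hi
          rw [Finset.mem_compl] at hi
          by_contra h
          push_neg at h
          have hθle := hmin i h
          rcases lt_or_eq_of_le hθle with h' | h'
          · exact hi (Finset.mem_union_left _ ((hmemS' i).mpr h'))
          · exact hi (Finset.mem_union_right _ ((hmemS'' i).mpr h'.symm))
        have hUstarB : Ustar = ∑ i ∈ S' ∪ S'', u i * (b i : ℝ) := by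
          rw [Finset.sum_union hdisj, hUstar, hD2B]
          have : θ * ((∑ i ∈ S'', b i : ℕ) : ℝ) = ∑ i ∈ S'', u i * (b i : ℝ) := by
            rw [Nat.cast_sum, Finset.mul_sum]
            exact Finset.sum_congr rfl (fun i hi => by rw [(hmemS'' i).mp hi])
          rw [this]
        have hkeyB : ∀ z : Ω → ℕ, ∑ i, u i * (z i : ℝ) =
            ∑ i ∈ S' ∪ S'', u i * (z i : ℝ) + ∑ i ∈ (S' ∪ S'')ᶜ, u i * (z i : ℝ) :=
          fun z => (Finset.sum_add_sum_compl _ _).symm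
        have htB1 : ∀ z : Ω → ℕ, (∀ i, z i ≤ b i) →
            ∑ i ∈ S' ∪ S'', u i * (z i : ℝ) ≤ ∑ i ∈ S' ∪ S'', u i * (b i : ℝ) := by
          intro z hzb
          apply Finset.sum_le_sum
          intro i hi
          exact mul_le_mul_of_nonneg_left (Nat.cast_le.mpr (hzb i)) (le_of_lt (hposU i hi))
        have htB2 : ∀ z : Ω → ℕ, ∑ i ∈ (S' ∪ S'')ᶜ, u i * (z i : ℝ) ≤ 0 := by
          intro z
          apply Finset.sum_nonpos
          intro i hi
          exact mul_nonpos_of_nonpos_of_nonneg (hnegU i hi) (Nat.cast_nonneg _)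
        constructor
        · intro z hz
          rw [hkeyB z, hUstarB]
          have := htB1 z hz.1
          have := htB2 z
          linarith
        · intro z hz heq
          rw [hkeyB z, hUstarB] at heq
          have h1 := htB1 z hz.1
          have h2 := htB2 z
          have eB1 : ∑ i ∈ S' ∪ S'', u i * (z i : ℝ) = ∑ i ∈ S' ∪ S'', u i * (b i : ℝ) := by
            linarith
          have eB2 : ∑ i ∈ (S' ∪ S'')ᶜ, u i * (z i : ℝ) = 0 := by linarith
          have hcb : ∀ i ∈ S' ∪ S'', z i = b i := by
            have hzero : ∑ i ∈ S' ∪ S'', (u i * (b i : ℝ) - u i * (z i : ℝ)) = 0 := by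
              rw [Finset.sum_sub_distrib]; linarith
            have hterm := (Finset.sum_eq_zero_iff_of_nonneg (fun i hi => by
              have hup := le_of_lt (hposU i hi)
              have hzb : (z i : ℝ) ≤ (b i : ℝ) := Nat.cast_le.mpr (hz.1 i)
              have := mul_nonneg hup (sub_nonneg.mpr hzb)
              nlinarith)).mp hzero
            intro i hi
            have := hterm i hi
            have hpos := hposU i hi
            have : (b i : ℝ) = (z i : ℝ) := by
              rcases mul_eq_zero.mp (show u i * ((b i : ℝ) - (z i : ℝ)) = 0 by linarith) with h | h
              · linarith
              · linarith
            exact (Nat.cast_injective this).symm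
          have hczero : ∀ i ∈ (S' ∪ S'')ᶜ, u i * (z i : ℝ) = 0 := by
            have := (Finset.sum_eq_zero_iff_of_nonpos (fun i hi =>
              mul_nonpos_of_nonpos_of_nonneg (hnegU i hi) (Nat.cast_nonneg (z i)))).mp eB2
            exact this
          refine ⟨fun i hi => hcb i (Finset.mem_union_left _ hi), ?_, ?_⟩
          · rw [hD2B]
            exact Finset.sum_congr rfl (fun i hi => hcb i (Finset.mem_union_right _ hi))
          · intro i hi
            rw [Finset.mem_union] at hi
            push_neg at hi
            have hic : i ∈ (S' ∪ S'')ᶜ := Finset.mem_compl.mpr hi.1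
            have := hczero i hic
            rcases mul_eq_zero.mp this with h | h
            · exact absurd ((hS3 i).mpr h) hi.2
            · exact_mod_cast h
    obtain ⟨hUB, hREV⟩ := hmain
    -- witness bundle
    have hwit : ∃ w : Ω → ℕ, IsBundle b (d j) w ∧ (∀ i ∈ S', w i = b i) ∧
        (∑ i ∈ S'', w i = D2) ∧ (∀ i, i ∉ S' ∪ S'' ∪ OmegaPPP u → w i = 0) := by
      have hD2le : D2 ≤ ∑ i ∈ S'', b i := by rw [hdPPr]; omega
      obtain ⟨f, hf1, hf2, hf3⟩ := fill_exists S'' b D2 hD2le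
      refine ⟨fun i => if i ∈ S' then b i else f i, ⟨⟨?_, ?_⟩, ?_, ?_, ?_⟩⟩
      · intro i; by_cases h : i ∈ S' <;> simp [h, hf1 i]
      · have hsum : ∑ i, (if i ∈ S' then b i else f i) =
            ∑ i ∈ S', (if i ∈ S' then b i else f i) +
            ∑ i ∈ S'ᶜ, (if i ∈ S' then b i else f i) := (Finset.sum_add_sum_compl _ _).symm
        rw [hsum]
        have e1 : ∑ i ∈ S', (if i ∈ S' then b i else f i) = ∑ i ∈ S', b i :=
          Finset.sum_congr rfl (fun i hi => if_pos hi)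
        have e2 : ∑ i ∈ S'ᶜ, (if i ∈ S' then b i else f i) = D2 := by
          have e2a : ∑ i ∈ S'ᶜ, (if i ∈ S' then b i else f i) = ∑ i ∈ S'ᶜ, f i :=
            Finset.sum_congr rfl (fun i hi => if_neg (Finset.mem_compl.mp hi))
          have hsub : S'' ⊆ S'ᶜ := by
            intro i hi
            exact Finset.mem_compl.mpr (Finset.disjoint_right.mp hdisj hi)
          have e2b : ∑ i ∈ S'ᶜ, f i = ∑ i ∈ S'', f i := by
            symm
            apply Finset.sum_subset hsub
            intro i _ hi
            exact hf2 i hi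
          rw [e2a, e2b, hf3]
        rw [e1, e2]
        have : D2 ≤ d j - ∑ i ∈ S', b i := by rw [hdPPr]; omega
        omega
      · intro i hi; exact if_pos hi
      · have : ∀ i ∈ S'', (if i ∈ S' then b i else f i) = f i := by
          intro i hi
          exact if_neg (Finset.disjoint_right.mp hdisj hi)
        rw [Finset.sum_congr rfl this, hf3]
      · intro i hi
        rw [Finset.mem_union, Finset.mem_union] at hi
        push_neg at hi
        show (if i ∈ S' then b i else f i) = 0
        rw [if_neg hi.1.1]
        exact hf2 i hi.1.2
    obtain ⟨w, hwb, hw1, hw2, hw3⟩ := hwit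
    rw [hOP, hOPP]
    constructor
    · rintro ⟨_, hopt⟩
      have hge : Ustar ≤ ∑ i, u i * (y i : ℝ) := by
        have := hopt w hwb
        rw [hutil, hutil] at this
        rw [← hEQ w hw1 hw2 hw3]
        exact this
      have hle := hUB y hy
      exact hREV y hy (le_antisymm hle hge)
    · rintro ⟨h1, h2, h3⟩
      refine ⟨hy, fun z hz => ?_⟩
      rw [hutil, hutil, hEQ y h1 h2 h3]
      exact hUB z hz
end

section
/- Social optimality of Walrasian equilibria: let p be a price vector and x an allocation that is stable for p and in which every object with positive price is completely sold, i.e. ∑_{j∈N} x i j = b i for every i with p(i) > 0. Then x maximizes the welfare ∑_{i∈Ω}∑_{j∈N} v i j · x i j among all feasible allocations. -/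
open Finset

/-- Welfare of an allocation. -/
def welfare {Ω N : Type*} [Fintype Ω] [Fintype N] (v : Ω → N → ℕ) (x : Ω → N → ℕ) : ℕ :=
  ∑ i, ∑ j, v i j * x i j

lemma welfare_decomp {Ω N : Type*} [Fintype Ω] [Fintype N] (v : Ω → N → ℕ)
    (p : Ω → ℝ) (y : Ω → N → ℕ) :
    (welfare v y : ℝ)
      = ∑ j, utility (fun i => v i j) p (fun i => y i j)
        + ∑ i, p i * (∑ j, y i j : ℕ) := by
  unfold welfare utility
  push_cast
  rw [Finset.sum_comm (γ := N)]
  rw [← Finset.sum_add_distrib]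
  congr 1; ext i
  rw [Finset.mul_sum, ← Finset.sum_add_distrib]
  congr 1; ext j
  ring

theorem walrasian_equilibrium_socially_optimal'
    {Ω N : Type*} [Fintype Ω] [Fintype N]
    (b : Ω → ℕ) (d : N → ℕ) (v : Ω → N → ℕ)
    (p : Ω → ℝ) (hp : ∀ i, 0 ≤ p i)
    (x : Ω → N → ℕ) (hstable : Stable b d v p x)
    (hsold : ∀ i, 0 < p i → ∑ j, x i j = b i) :
    ∀ z : Ω → N → ℕ, Feasible b d z → welfare v z ≤ welfare v x := by
  intro z hz
  have key : (welfare v z : ℝ) ≤ (welfare v x : ℝ) := by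
    rw [welfare_decomp, welfare_decomp]
    have h1 : ∑ j, utility (fun i => v i j) p (fun i => z i j)
        ≤ ∑ j, utility (fun i => v i j) p (fun i => x i j) := by
      apply Finset.sum_le_sum
      intro j _
      apply (hstable.2 j).2
      exact ⟨fun i => le_trans (Finset.single_le_sum (f := fun k => z i k)
        (fun k _ => Nat.zero_le _) (Finset.mem_univ j)) (hz.1 i), hz.2 j⟩
    have h2 : ∑ i, p i * ((∑ j, z i j : ℕ) : ℝ)
        ≤ ∑ i, p i * ((∑ j, x i j : ℕ) : ℝ) := by
      apply Finset.sum_le_sum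
      intro i _
      rcases lt_or_eq_of_le (hp i) with hpi | hpi
      · rw [hsold i hpi]
        exact mul_le_mul_of_nonneg_left (by exact_mod_cast hz.1 i) (le_of_lt hpi)
      · simp [← hpi]
    linarith
  exact_mod_cast key

/-- a stable allocation that completely sells every positively priced
object maximizes welfare among all feasible allocations. -/
theorem walrasian_equilibrium_socially_optimal
    {Ω N : Type*} [Fintype Ω] [Fintype N]
    (b : Ω → ℕ) (d : N → ℕ) (v : Ω → N → ℕ)
    (p : Ω → ℝ) (hp : ∀ i, 0 ≤ p i)
    (x : Ω → N → ℕ) (hstable : Stable b d v p x)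
    (hsold : ∀ i, 0 < p i → ∑ j, x i j = b i) :
    ∀ z : Ω → N → ℕ, Feasible b d z → welfare v z ≤ welfare v x := by
  exact walrasian_equilibrium_socially_optimal' b d v p hp x hstable hsold
end

section
/- Integrality of minimum competitive prices: since all valuations v i j are integers, the componentwise minimum competitive price vector p* (the competitive price vector with p*(i) ≤ q(i) for every object i and every competitive price vector q) takes integer values, i.e. p*(i) ∈ ℕ for every i ∈ Ω. -/
open Finset

section Aux
variable {Ω : Type*} [Fintype Ω] [DecidableEq Ω]

lemma utility_update (v : Ω → ℕ) (p : Ω → ℝ) (y : Ω → ℕ) (i : Ω) (t : ℕ) :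
    utility v p (Function.update y i t) =
      utility v p y + ((v i : ℝ) - p i) * ((t : ℝ) - (y i : ℝ)) := by
  unfold utility
  have h : ∀ f : Ω → ℕ, ∑ j, ((v j : ℝ) - p j) * (f j : ℝ)
      = ((v i : ℝ) - p i) * (f i : ℝ) + ∑ j ∈ univ.erase i, ((v j : ℝ) - p j) * (f j : ℝ) := by
    intro f
    rw [← Finset.add_sum_erase _ _ (mem_univ i)]
  rw [h, h y]
  have h2 : ∑ j ∈ univ.erase i, ((v j : ℝ) - p j) * ((Function.update y i t j : ℕ) : ℝ)
      = ∑ j ∈ univ.erase i, ((v j : ℝ) - p j) * (y j : ℝ) := by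
    apply Finset.sum_congr rfl
    intro j hj
    rw [Function.update_of_ne (Finset.ne_of_mem_erase hj)]
  rw [h2, Function.update_self]
  ring

lemma sum_update_nat (y : Ω → ℕ) (i : Ω) (t : ℕ) :
    ∑ j, Function.update y i t j = ∑ j ∈ univ.erase i, y j + t := by
  rw [← Finset.add_sum_erase _ _ (mem_univ i), Function.update_self, add_comm]
  congr 1
  exact Finset.sum_congr rfl fun j hj => Function.update_of_ne (Finset.ne_of_mem_erase hj) _ _

lemma sum_erase_nat (y : Ω → ℕ) (i : Ω) :
    ∑ j, y j = ∑ j ∈ univ.erase i, y j + y i := by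
  rw [← Finset.add_sum_erase _ _ (mem_univ i), add_comm]

end Aux

lemma exchange_lemma {Ω : Type*} [Fintype Ω] [DecidableEq Ω]
    (b : Ω → ℕ) (dj : ℕ) (v : Ω → ℕ) (p : Ω → ℝ)
    (hp0 : ∀ i, 0 ≤ p i)
    (S : Finset Ω) (hS : ∀ i, i ∉ S ↔ ∃ m : ℕ, p i = (m : ℝ))
    (x z : Ω → ℕ) (hx : InDemand b dj v p x) (hz : InDemand b dj v p z) :
    ∑ i ∈ S, z i ≤ ∑ i ∈ S, x i := by
  by_contra hcon
  push_neg at hcon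
  obtain ⟨i, hiS, hxz⟩ := Finset.exists_lt_of_sum_lt hcon
  have hz1 : 1 ≤ z i := Nat.one_le_iff_ne_zero.mpr (by omega)
  -- margin at i is nonnegative
  have hdropz : utility v p (Function.update z i (z i - 1)) = utility v p z - ((v i : ℝ) - p i) := by
    rw [utility_update]
    have : ((z i - 1 : ℕ) : ℝ) = (z i : ℝ) - 1 := by
      push_cast [Nat.cast_sub hz1]; ring
    rw [this]; ring
  have hbz' : IsBundle b dj (Function.update z i (z i - 1)) := by
    constructor
    · intro j
      by_cases hj : j = i
      · subst hj; rw [Function.update_self]; exact le_trans (Nat.sub_le _ _) (hz.1.1 j)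
      · rw [Function.update_of_ne hj]; exact hz.1.1 j
    · rw [sum_update_nat]
      have := sum_erase_nat z i
      have := hz.1.2
      omega
  have hci0 : 0 ≤ (v i : ℝ) - p i := by
    have := hz.2 _ hbz'
    rw [hdropz] at this
    linarith
  have hci : 0 < (v i : ℝ) - p i := by
    rcases lt_or_eq_of_le hci0 with h | h
    · exact h
    · exfalso
      have : p i = (v i : ℝ) := by linarith
      exact ((hS i).mpr ⟨v i, this⟩) hiS
    -- total demand of x is full
  have hxfull : ∑ j, x j = dj := by
    by_contra hfull
    have hlt : ∑ j, x j < dj := lt_of_le_of_ne hx.1.2 hfull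
    have hb : IsBundle b dj (Function.update x i (x i + 1)) := by
      constructor
      · intro j
        by_cases hj : j = i
        · subst hj; rw [Function.update_self]
          exact le_trans (by omega) (hz.1.1 j)
        · rw [Function.update_of_ne hj]; exact hx.1.1 j
      · rw [sum_update_nat]
        have := sum_erase_nat x i
        omega
    have := hx.2 _ hb
    rw [utility_update] at this
    push_cast at this
    nlinarith
  have hsum : ∑ j, z j ≤ ∑ j, x j := by rw [hxfull]; exact hz.1.2
  -- find k outside S with z k < x k
  have hsplit : ∀ y : Ω → ℕ, ∑ j, y j = ∑ j ∈ S, y j + ∑ j ∈ univ \ S, y j := by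
    intro y
    rw [add_comm, Finset.sum_sdiff (Finset.subset_univ S)]
  have hklt : ∑ j ∈ univ \ S, z j < ∑ j ∈ univ \ S, x j := by
    have h1 := hsplit z
    have h2 := hsplit x
    omega
  obtain ⟨k, hkmem, hzk⟩ := Finset.exists_lt_of_sum_lt hklt
  have hkS : k ∉ S := (Finset.mem_sdiff.mp hkmem).2
  have hki : k ≠ i := fun h => hkS (h ▸ hiS)
  have hxk1 : 1 ≤ x k := by omega
  -- margin at k is nonnegative
  have hbk : IsBundle b dj (Function.update x k (x k - 1)) := by
    constructor
    · intro j
      by_cases hj : j = k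
      · subst hj; rw [Function.update_self]; exact le_trans (Nat.sub_le _ _) (hx.1.1 j)
      · rw [Function.update_of_ne hj]; exact hx.1.1 j
    · rw [sum_update_nat]
      have := sum_erase_nat x k
      have := hx.1.2
      omega
  have hck0 : 0 ≤ (v k : ℝ) - p k := by
    have := hx.2 _ hbk
    rw [utility_update] at this
    have hc : ((x k - 1 : ℕ) : ℝ) = (x k : ℝ) - 1 := by
      push_cast [Nat.cast_sub hxk1]; ring
    rw [hc] at this
    nlinarith
  rcases lt_trichotomy ((v i : ℝ) - p i) ((v k : ℝ) - p k) with hc | hc | hc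
  · -- swap in z : remove i, add k
    set z' := Function.update (Function.update z i (z i - 1)) k (z k + 1) with hz'
    have hwk : Function.update z i (z i - 1) k = z k := Function.update_of_ne hki _ _
    have hb' : IsBundle b dj z' := by
      constructor
      · intro j
        rw [hz']
        by_cases hjk : j = k
        · subst hjk; rw [Function.update_self]
          exact le_trans (by omega) (hx.1.1 j)
        · rw [Function.update_of_ne hjk]
          by_cases hji : j = i
          · subst hji; rw [Function.update_self]; exact le_trans (Nat.sub_le _ _) (hz.1.1 j)
          · rw [Function.update_of_ne hji]; exact hz.1.1 j
      · rw [hz', sum_update_nat]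
        have h1 := sum_erase_nat (Function.update z i (z i - 1)) k
        rw [hwk] at h1
        have h2 := sum_update_nat z i (z i - 1)
        have h3 := sum_erase_nat z i
        have := hz.1.2
        omega
    have hu' : utility v p z' = utility v p z - ((v i : ℝ) - p i) + ((v k : ℝ) - p k) := by
      rw [hz', utility_update, hwk, hdropz]
      push_cast
      ring
    have := hz.2 _ hb'
    rw [hu'] at this
    linarith
  · -- equal margins: p i would be a natural number
    obtain ⟨m, hm⟩ := (hS k).mp hkS
    have hpi : p i = ((v i : ℤ) - (v k : ℤ) + (m : ℤ) : ℤ) := by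
      push_cast
      rw [hm] at hc
      linarith
    have hnn : (0 : ℤ) ≤ (v i : ℤ) - (v k : ℤ) + (m : ℤ) := by
      have := hp0 i
      rw [hpi] at this
      exact_mod_cast this
    refine ((hS i).mpr ⟨((v i : ℤ) - (v k : ℤ) + (m : ℤ)).toNat, ?_⟩) hiS
    rw [hpi]
    exact_mod_cast (Int.toNat_of_nonneg hnn).symm
  · -- swap in x : remove k, add i
    set x' := Function.update (Function.update x k (x k - 1)) i (x i + 1) with hx'
    have hwi : Function.update x k (x k - 1) i = x i := Function.update_of_ne (Ne.symm hki) _ _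
    have hb' : IsBundle b dj x' := by
      constructor
      · intro j
        rw [hx']
        by_cases hji : j = i
        · subst hji; rw [Function.update_self]
          exact le_trans (by omega) (hz.1.1 j)
        · rw [Function.update_of_ne hji]
          by_cases hjk : j = k
          · subst hjk; rw [Function.update_self]; exact le_trans (Nat.sub_le _ _) (hx.1.1 j)
          · rw [Function.update_of_ne hjk]; exact hx.1.1 j
      · rw [hx', sum_update_nat]
        have h1 := sum_erase_nat (Function.update x k (x k - 1)) i
        rw [hwi] at h1
        have h2 := sum_update_nat x k (x k - 1)
        have h3 := sum_erase_nat x k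
        have := hx.1.2
        omega
    have hdropx : utility v p (Function.update x k (x k - 1)) = utility v p x - ((v k : ℝ) - p k) := by
      rw [utility_update]
      have hcst : ((x k - 1 : ℕ) : ℝ) = (x k : ℝ) - 1 := by
        push_cast [Nat.cast_sub hxk1]; ring
      rw [hcst]; ring
    have hu' : utility v p x' = utility v p x - ((v k : ℝ) - p k) + ((v i : ℝ) - p i) := by
      rw [hx', utility_update, hwi, hdropx]
      push_cast
      ring
    have := hx.2 _ hb'
    rw [hu'] at this
    linarith

/-- the componentwise minimum competitive price vector is integral. -/
theorem min_competitive_prices_integral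
    {Ω N : Type*} [Fintype Ω] [Fintype N]
    (b : Ω → ℕ) (d : N → ℕ) (v : Ω → N → ℕ) (pstar : Ω → ℝ)
    (hcomp : Competitive b d v pstar)
    (hmin : ∀ q : Ω → ℝ, Competitive b d v q → ∀ i, pstar i ≤ q i) :
    ∀ i, ∃ n : ℕ, pstar i = (n : ℝ) := by
  classical
  by_contra hcon
  push_neg at hcon
  obtain ⟨i0, hi0⟩ := hcon
  set S : Finset Ω := univ.filter (fun i => ¬∃ n : ℕ, pstar i = (n : ℝ)) with hSdef
  have hS : ∀ i, i ∉ S ↔ ∃ n : ℕ, pstar i = (n : ℝ) := by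
    intro i
    simp [hSdef]
  have hi0S : i0 ∈ S := by
    by_contra h
    exact hi0 ((hS i0).mp h).choose ((hS i0).mp h).choose_spec
  obtain ⟨hp0, x, hxstab⟩ := hcomp
  have hppos : ∀ i ∈ S, 0 < pstar i := by
    intro i hi
    rcases lt_or_eq_of_le (hp0 i) with h | h
    · exact h
    · exact absurd ((hS i).mpr ⟨0, by simp [← h]⟩) (by simpa using hi)
  set D : ℕ := ∑ i, b i with hDdef
  have hφD : ∀ z : Ω → ℕ, (∀ i, z i ≤ b i) → ∑ i ∈ S, z i ≤ D := by
    intro z hzb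
    calc ∑ i ∈ S, z i ≤ ∑ i ∈ S, b i := Finset.sum_le_sum fun i _ => hzb i
    _ ≤ ∑ i, b i := Finset.sum_le_sum_of_subset (Finset.subset_univ S)
  -- gaps
  set gap : N × (∀ i : Ω, Fin (b i + 1)) → ℝ := fun jw =>
    utility (fun i => v i jw.1) pstar (fun i => x i jw.1)
      - utility (fun i => v i jw.1) pstar (fun i => (jw.2 i : ℕ)) with hgapdef
  set G : Finset ℝ :=
    ((univ : Finset (N × (∀ i : Ω, Fin (b i + 1)))).image gap).filter (fun g => 0 < g) with hGdef
  set E : Finset ℝ := insert 1 (G.image (fun g => g / ((D : ℝ) + 1)) ∪ S.image pstar) with hEdef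
  have hEne : E.Nonempty := ⟨1, Finset.mem_insert_self _ _⟩
  set ε : ℝ := E.min' hEne with hεdef
  have hEpos : ∀ e ∈ E, 0 < e := by
    intro e he
    rw [hEdef] at he
    rcases Finset.mem_insert.mp he with h | h
    · rw [h]; norm_num
    · rcases Finset.mem_union.mp h with h | h
      · obtain ⟨g, hg, rfl⟩ := Finset.mem_image.mp h
        have : 0 < g := (Finset.mem_filter.mp hg).2
        positivity
      · obtain ⟨i, hi, rfl⟩ := Finset.mem_image.mp h
        exact hppos i hi
  have hεpos : 0 < ε := hEpos _ (E.min'_mem hEne)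
  have hεle : ∀ e ∈ E, ε ≤ e := fun e he => E.min'_le e he
  set q : Ω → ℝ := fun i => if i ∈ S then pstar i - ε else pstar i with hqdef
  -- utility at q
  have hqu : ∀ (j : N) (z : Ω → ℕ),
      utility (fun i => v i j) q z
        = utility (fun i => v i j) pstar z + ε * (∑ i ∈ S, z i : ℕ) := by
    intro j z
    unfold utility
    have : ∀ i : Ω, ((v i j : ℝ) - q i) * (z i : ℝ)
        = ((v i j : ℝ) - pstar i) * (z i : ℝ) + (if i ∈ S then ε * (z i : ℝ) else 0) := by
      intro i
      by_cases hi : i ∈ S <;> simp [hqdef, hi] <;> ring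
    rw [Finset.sum_congr rfl fun i _ => this i, Finset.sum_add_distrib]
    congr 1
    rw [Finset.sum_ite_mem, Finset.univ_inter, ← Finset.mul_sum]
    congr 1
    exact_mod_cast (Nat.cast_sum S z).symm
  have hqcomp : Competitive b d v q := by
    constructor
    · intro i
      by_cases hi : i ∈ S
      · have h1 : ε ≤ pstar i := hεle _ (by
          rw [hEdef]
          exact Finset.mem_insert_of_mem (Finset.mem_union_right _ (Finset.mem_image_of_mem _ hi)))
        simp only [hqdef, if_pos hi]
        linarith
      · simp only [hqdef, if_neg hi]
        exact hp0 i
    · refine ⟨x, hxstab.1, fun j => ?_⟩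
      obtain ⟨hbxj, hopt⟩ := hxstab.2 j
      refine ⟨hbxj, fun z hz => ?_⟩
      rw [hqu, hqu]
      have hg0 : utility (fun i => v i j) pstar z ≤ utility (fun i => v i j) pstar (fun i => x i j) :=
        hopt z hz
      rcases eq_or_lt_of_le hg0 with heq | hlt
      · -- z is also optimal at pstar; use the exchange lemma
        have hzdem : InDemand b (d j) (fun i => v i j) pstar z :=
          ⟨hz, fun w hw => heq ▸ hopt w hw⟩
        have hφ : ∑ i ∈ S, z i ≤ ∑ i ∈ S, x i j :=
          exchange_lemma b (d j) (fun i => v i j) pstar hp0 S hS (fun i => x i j) z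
            ⟨hbxj, hopt⟩ hzdem
        have : ε * ((∑ i ∈ S, z i : ℕ) : ℝ) ≤ ε * ((∑ i ∈ S, x i j : ℕ) : ℝ) := by
          apply mul_le_mul_of_nonneg_left _ (le_of_lt hεpos)
          exact_mod_cast hφ
        linarith
      · -- strict gap
        set g : ℝ := utility (fun i => v i j) pstar (fun i => x i j)
          - utility (fun i => v i j) pstar z with hgdef
        have hgpos : 0 < g := by rw [hgdef]; linarith
        have hgG : g ∈ G := by
          rw [hGdef]
          refine Finset.mem_filter.mpr ⟨Finset.mem_image.mpr ⟨⟨j, fun i => ⟨z i, Nat.lt_succ_of_le (hz.1 i)⟩⟩, Finset.mem_univ _, ?_⟩, hgpos⟩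
          rw [hgapdef, hgdef]
        have hεg : ε ≤ g / ((D : ℝ) + 1) := hεle _ (by
          rw [hEdef]
          exact Finset.mem_insert_of_mem (Finset.mem_union_left _ (Finset.mem_image_of_mem _ hgG)))
        have hφz : ((∑ i ∈ S, z i : ℕ) : ℝ) ≤ (D : ℝ) := by
          exact_mod_cast hφD z hz.1
        have hkey : ε * ((∑ i ∈ S, z i : ℕ) : ℝ) ≤ g := by
          have h1 : ε * ((∑ i ∈ S, z i : ℕ) : ℝ) ≤ (g / ((D : ℝ) + 1)) * (D : ℝ) := by
            apply mul_le_mul hεg hφz (by positivity) (by positivity)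
          have h2 : (g / ((D : ℝ) + 1)) * (D : ℝ) ≤ g := by
            rw [div_mul_eq_mul_div, div_le_iff₀ (by positivity)]
            nlinarith
          linarith
        have hφx : (0 : ℝ) ≤ ε * ((∑ i ∈ S, x i j : ℕ) : ℝ) := by positivity
        rw [hgdef] at hkey
        linarith
  have := hmin q hqcomp i0
  rw [hqdef] at this
  simp only [if_pos hi0S] at this
  linarith
end

section
/- Failure of the duplication method (Example 1): in the market with one buyer (N = {1}) of demand d 1 = 2 and two objects Ω = {α, β} with supplies b α = b β = 1 and valuations v α 1 = 5, v β 1 = 1, the price vector p = (0, 0) together with the allocation assigning one copy of α and one copy of β to the buyer is a Walrasian equilibrium (the allocation is stable for p and sells min(∑ b, ∑ d) = 2 items); consequently p = (0, 0) is a componentwise minimum Walrasian price vector of this instance. -/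
open Finset

/-- Example 1: one buyer of demand 2; two objects of supply 1 with values
5 and 1. Prices `(0, 0)` with the allocation giving one copy of each object to the buyer
form a Walrasian equilibrium, and `(0, 0)` is a componentwise minimum Walrasian price
vector. -/
theorem duplication_example_buyer_optimal :
    Stable (fun _ => 1 : Fin 2 → ℕ) (fun _ => 2 : Fin 1 → ℕ)
        (![![5], ![1]] : Fin 2 → Fin 1 → ℕ) (fun _ => (0 : ℝ)) (fun _ _ => 1) ∧
      (∑ i : Fin 2, ∑ j : Fin 1, (fun (_ : Fin 2) (_ : Fin 1) => 1 : Fin 2 → Fin 1 → ℕ) i j =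
        min (∑ _i : Fin 2, (1 : ℕ)) (∑ _j : Fin 1, (2 : ℕ))) ∧
      MinWalrasian (fun _ => 1 : Fin 2 → ℕ) (fun _ => 2 : Fin 1 → ℕ)
        (![![5], ![1]] : Fin 2 → Fin 1 → ℕ) (fun _ => (0 : ℝ)) := by
  have hstab : Stable (fun _ => 1 : Fin 2 → ℕ) (fun _ => 2 : Fin 1 → ℕ)
      (![![5], ![1]] : Fin 2 → Fin 1 → ℕ) (fun _ => (0 : ℝ)) (fun _ _ => 1) := by
    refine ⟨⟨fun i => by simp, fun j => by simp⟩,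
      fun j => ⟨⟨fun i => le_refl 1, by simp⟩, ?_⟩⟩
    intro z hz
    unfold utility
    simp only [sub_zero, Nat.cast_one, mul_one]
    apply Finset.sum_le_sum
    intro i _
    have h1 : (z i : ℝ) ≤ 1 := by exact_mod_cast hz.1 i
    have h0 : (0:ℝ) ≤ ((![![5], ![1]] i j : ℕ) : ℝ) := Nat.cast_nonneg _
    nlinarith
  have hsum : ∑ i : Fin 2, ∑ j : Fin 1,
      (fun (_ : Fin 2) (_ : Fin 1) => 1 : Fin 2 → Fin 1 → ℕ) i j =
      min (∑ _i : Fin 2, (1 : ℕ)) (∑ _j : Fin 1, (2 : ℕ)) := by decide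
  exact ⟨hstab, hsum, ⟨⟨fun i => le_refl 0, ⟨_, hstab, hsum⟩⟩, fun q hq i => hq.1 i⟩⟩
end

section
/- Unbounded sensitivity of Walrasian prices: let M ∈ ℕ with M ≥ 1 and consider two buyers N = {1, 2} and two objects Ω = {α, β} with supplies b α = b β = 2 and valuations v i j = M for all i ∈ Ω, j ∈ N. (a) For demands d 1 = d 2 = 2, the zero price vector is Walrasian. (b) For demands d 1 = 3, d 2 = 2, a price vector p is Walrasian if and only if p α = p β = M. Hence increasing one buyer's demand by one unit changes the componentwise minimum Walrasian price of each object from 0 to M. -/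
open Finset

private lemma key_price_eq (M : ℕ) (hM : 1 ≤ M) (pa pb : ℝ)
    (a0 b0 a1 b1 : ℕ)
    (hsa : a0 + a1 = 2) (hsb : b0 + b1 = 2) (hd0 : a0 + b0 ≤ 3) (hd1 : a1 + b1 ≤ 2)
    (hopt0 : ∀ za zb : ℕ, za ≤ 2 → zb ≤ 2 → za + zb ≤ 3 →
      ((M:ℝ) - pa) * za + ((M:ℝ) - pb) * zb ≤ ((M:ℝ) - pa) * a0 + ((M:ℝ) - pb) * b0)
    (hopt1 : ∀ za zb : ℕ, za ≤ 2 → zb ≤ 2 → za + zb ≤ 2 →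
      ((M:ℝ) - pa) * za + ((M:ℝ) - pb) * zb ≤ ((M:ℝ) - pa) * a1 + ((M:ℝ) - pb) * b1) :
    pa = M := by
  have h1 : (0:ℝ) ≤ ((M:ℝ) - pa) * a0 := by
    have := hopt0 0 b0 (by omega) (by omega) (by omega)
    push_cast at this; linarith
  have h2 : (0:ℝ) ≤ ((M:ℝ) - pa) * a1 := by
    have := hopt1 0 b1 (by omega) (by omega) (by omega)
    push_cast at this; linarith
  have h3 : (0:ℝ) ≤ ((M:ℝ) - pb) * b0 := by
    have := hopt0 a0 0 (by omega) (by omega) (by omega)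
    push_cast at this; linarith
  have h4 : (0:ℝ) ≤ ((M:ℝ) - pb) * b1 := by
    have := hopt1 a1 0 (by omega) (by omega) (by omega)
    push_cast at this; linarith
  have hpaM : pa ≤ M := by
    by_contra h
    push_neg at h
    have ha0 : a0 = 0 := by
      by_contra h0
      have hpos : (1:ℝ) ≤ (a0:ℕ) := by exact_mod_cast Nat.one_le_iff_ne_zero.mpr h0
      nlinarith
    have ha1 : a1 = 0 := by
      by_contra h0
      have hpos : (1:ℝ) ≤ (a1:ℕ) := by exact_mod_cast Nat.one_le_iff_ne_zero.mpr h0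
      nlinarith
    omega
  have hpbM : pb ≤ M := by
    by_contra h
    push_neg at h
    have hb0' : b0 = 0 := by
      by_contra h0
      have hpos : (1:ℝ) ≤ (b0:ℕ) := by exact_mod_cast Nat.one_le_iff_ne_zero.mpr h0
      nlinarith
    have hb1' : b1 = 0 := by
      by_contra h0
      have hpos : (1:ℝ) ≤ (b1:ℕ) := by exact_mod_cast Nat.one_le_iff_ne_zero.mpr h0
      nlinarith
    omega
  by_contra hne
  have hlt : pa < M := lt_of_le_of_ne hpaM hne
  have hcase : a0 = 2 ∨ a0 + b0 = 3 := by
    by_contra hc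
    push_neg at hc
    have := hopt0 (a0 + 1) b0 (by omega) (by omega) (by omega)
    push_cast at this
    nlinarith
  rcases hcase with ha0 | hab
  · have ha1 : a1 = 0 := by omega
    rcases lt_or_ge pb (M:ℝ) with hpb | hpb
    · have hb1 : b1 = 2 := by
        by_contra hb
        have := hopt1 a1 (b1 + 1) (by omega) (by omega) (by omega)
        push_cast at this
        nlinarith
      have hb0 : b0 = 0 := by omega
      have := hopt0 a0 (b0 + 1) (by omega) (by omega) (by omega)
      push_cast at this
      nlinarith
    · have hpb' : pb = M := le_antisymm hpbM hpb
      have := hopt1 2 0 (by omega) (by omega) (by omega)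
      rw [ha1, hpb'] at this
      push_cast at this
      nlinarith
  · have := hopt1 (a1 + 1) b1 (by omega) (by omega) (by omega)
    push_cast at this
    nlinarith

/-- two buyers, two objects of supply 2, all valuations `M ≥ 1`.
(a) With demands `(2, 2)` the zero price vector is Walrasian.
(b) With demands `(3, 2)` a price vector is Walrasian iff both prices equal `M`. -/
theorem walrasian_prices_unbounded_sensitivity (M : ℕ) (hM : 1 ≤ M) :
    Walrasian (fun _ => 2 : Fin 2 → ℕ) (fun _ => 2 : Fin 2 → ℕ)
        (fun _ _ => M) (fun _ => (0 : ℝ)) ∧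
      ∀ p : Fin 2 → ℝ, (∀ i, 0 ≤ p i) →
        (Walrasian (fun _ => 2 : Fin 2 → ℕ) (![3, 2] : Fin 2 → ℕ)
            (fun _ _ => M) p ↔ ∀ i, p i = (M : ℝ)) := by
  constructor
  · -- part (a): zero prices are Walrasian for demands (2,2)
    refine ⟨fun i => le_refl 0, fun _ _ => 1, ⟨⟨fun i => ?_, fun j => ?_⟩, fun j => ?_⟩, ?_⟩
    · simp [Fin.sum_univ_two]
    · simp [Fin.sum_univ_two]
    · refine ⟨⟨fun i => by norm_num, by simp [Fin.sum_univ_two]⟩, ?_⟩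
      intro z hz
      obtain ⟨hzb, hzs⟩ := hz
      rw [Fin.sum_univ_two] at hzs
      simp only [utility, Fin.sum_univ_two, sub_zero]
      have : (z 0 : ℝ) + z 1 ≤ 2 := by exact_mod_cast hzs
      have hM' : (0:ℝ) ≤ (M:ℝ) := by positivity
      push_cast
      nlinarith
    · simp [Fin.sum_univ_two]
  · intro p hp
    constructor
    · -- forward direction
      rintro ⟨hp0, x, ⟨⟨hfe1, hfe2⟩, hdem⟩, htot⟩
      have hs0 := hfe1 0
      have hs1 := hfe1 1
      have ht0 := hfe2 0
      have ht1 := hfe2 1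
      rw [Fin.sum_univ_two] at hs0 hs1 ht0 ht1
      rw [Fin.sum_univ_two, Fin.sum_univ_two, Fin.sum_univ_two, Fin.sum_univ_two,
        Fin.sum_univ_two] at htot
      simp only [Matrix.cons_val_zero, Matrix.cons_val_one, Matrix.head_cons] at ht0 ht1 htot
      beta_reduce at hs0 hs1 htot
      norm_num at htot

      obtain ⟨hb0, hopt0'⟩ := hdem 0
      obtain ⟨hb1, hopt1'⟩ := hdem 1
      simp only [Matrix.cons_val_zero, Matrix.cons_val_one, Matrix.head_cons] at hopt0' hopt1'
      have hopt0 : ∀ za zb : ℕ, za ≤ 2 → zb ≤ 2 → za + zb ≤ 3 →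
          ((M:ℝ) - p 0) * za + ((M:ℝ) - p 1) * zb ≤
            ((M:ℝ) - p 0) * (x 0 0) + ((M:ℝ) - p 1) * (x 1 0) := by
        intro za zb h1 h2 h3
        have := hopt0' ![za, zb] ⟨fun i => by fin_cases i <;> simpa,
          by rw [Fin.sum_univ_two]; simpa⟩
        simpa [utility, Fin.sum_univ_two] using this
      have hopt1 : ∀ za zb : ℕ, za ≤ 2 → zb ≤ 2 → za + zb ≤ 2 →
          ((M:ℝ) - p 0) * za + ((M:ℝ) - p 1) * zb ≤
            ((M:ℝ) - p 0) * (x 0 1) + ((M:ℝ) - p 1) * (x 1 1) := by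
        intro za zb h1 h2 h3
        have := hopt1' ![za, zb] ⟨fun i => by fin_cases i <;> simpa,
          by rw [Fin.sum_univ_two]; simpa⟩
        simpa [utility, Fin.sum_univ_two] using this
      have hs0' : x 0 (0 : Fin 2) + x 0 (1 : Fin 2) ≤ 2 := hs0
      have hs1' : x 1 (0 : Fin 2) + x 1 (1 : Fin 2) ≤ 2 := hs1
      have ht0' : x 0 (0 : Fin 2) + x 1 (0 : Fin 2) ≤ 3 := ht0
      have ht1' : x 0 (1 : Fin 2) + x 1 (1 : Fin 2) ≤ 2 := ht1
      have htot' : x 0 (0 : Fin 2) + x 0 (1 : Fin 2) + (x 1 (0 : Fin 2) + x 1 (1 : Fin 2)) = 4 :=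
        htot
      clear hs0 hs1 ht0 ht1 htot
      have e1 : x 0 (0 : Fin 2) + x 0 (1 : Fin 2) = 2 := by omega
      have e2 : x 1 (0 : Fin 2) + x 1 (1 : Fin 2) = 2 := by omega
      have hA : p 0 = M :=
        key_price_eq M hM (p 0) (p 1) (x 0 (0 : Fin 2)) (x 1 (0 : Fin 2)) (x 0 (1 : Fin 2))
          (x 1 (1 : Fin 2)) e1 e2 ht0' ht1' hopt0 hopt1
      have hB : p 1 = M :=
        key_price_eq M hM (p 1) (p 0) (x 1 (0 : Fin 2)) (x 0 (0 : Fin 2)) (x 1 (1 : Fin 2))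
          (x 0 (1 : Fin 2)) e2 e1 (by omega) (by omega)
          (fun za zb h1 h2 h3 => by have := hopt0 zb za h2 h1 (by omega); linarith)
          (fun za zb h1 h2 h3 => by have := hopt1 zb za h2 h1 (by omega); linarith)
      intro i
      fin_cases i
      · exact hA
      · exact hB
    · -- backward direction
      intro h
      refine ⟨hp, ![![2, 0], ![1, 1]], ⟨⟨fun i => ?_, fun j => ?_⟩, fun j => ?_⟩, ?_⟩
      · fin_cases i <;> simp [Fin.sum_univ_two]
      · fin_cases j <;> simp [Fin.sum_univ_two]
      · refine ⟨⟨fun i => ?_, ?_⟩, ?_⟩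
        · fin_cases i <;> fin_cases j <;> simp
        · fin_cases j <;> simp [Fin.sum_univ_two]
        · intro z hz
          simp [utility, Fin.sum_univ_two, h 0, h 1]
      · rw [Fin.sum_univ_two, Fin.sum_univ_two, Fin.sum_univ_two, Fin.sum_univ_two,
          Fin.sum_univ_two]
        simp
end

section
/- Per-object prices cannot realize VCG payments: consider the market with objects Ω = {α, β}, supplies b α = 3, b β = 2, buyers N = {1, 2, 3} with demands d 1 = 2, d 2 = 2, d 3 = 1 and valuations v α 1 = 3, v β 1 = 1, v α 2 = 2, v β 2 = 0, v α 3 = 0, v β 3 = 1. Then for every welfare-maximizing feasible allocation x there is no function p : Ω → ℝ such that for every buyer j the payment ∑_{i∈Ω} p(i) · x i j equals the VCG payment of j with respect to x. -/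
open Finset

/-- `W_{−j}`: the maximum welfare of a feasible allocation in which buyer `j`
receives nothing. -/
noncomputable def welfareWithout {Ω N : Type*} [Fintype Ω] [Fintype N]
    (b : Ω → ℕ) (d : N → ℕ) (v : Ω → N → ℕ) (j : N) : ℕ :=
  sSup {w : ℕ | ∃ z : Ω → N → ℕ, Feasible b d z ∧ (∀ i, z i j = 0) ∧ welfare v z = w}


lemma natSSup_eq {s : Set ℕ} {t : ℕ} (hm : t ∈ s) (hb : ∀ w ∈ s, w ≤ t) : sSup s = t :=
  IsGreatest.csSup_eq ⟨hm, hb⟩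

lemma ww0 : welfareWithout (![3, 2] : Fin 2 → ℕ) (![2, 2, 1] : Fin 3 → ℕ)
    (![![3, 2, 0], ![1, 0, 1]] : Fin 2 → Fin 3 → ℕ) 0 = 5 := by
  apply natSSup_eq
  · exact ⟨![![0,2,0],![0,0,1]], by
      constructor <;> intro k <;> fin_cases k <;> simp [Fin.sum_univ_succ],
      by intro i; fin_cases i <;> rfl,
      by simp [welfare, Fin.sum_univ_succ]⟩
  · rintro w ⟨z, ⟨h1, h2⟩, hz, rfl⟩
    have a0 := h1 0; have a1 := h1 1
    have b0 := h2 0; have b1 := h2 1; have b2 := h2 2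
    have c0 := hz 0; have c1 := hz 1
    simp [Fin.sum_univ_succ] at a0 a1 b0 b1 b2
    simp [welfare, Fin.sum_univ_succ]
    omega

lemma ww1 : welfareWithout (![3, 2] : Fin 2 → ℕ) (![2, 2, 1] : Fin 3 → ℕ)
    (![![3, 2, 0], ![1, 0, 1]] : Fin 2 → Fin 3 → ℕ) 1 = 7 := by
  apply natSSup_eq
  · exact ⟨![![2,0,0],![0,0,1]], by
      constructor <;> intro k <;> fin_cases k <;> simp [Fin.sum_univ_succ],
      by intro i; fin_cases i <;> rfl,
      by simp [welfare, Fin.sum_univ_succ]⟩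
  · rintro w ⟨z, ⟨h1, h2⟩, hz, rfl⟩
    have a0 := h1 0; have a1 := h1 1
    have b0 := h2 0; have b1 := h2 1; have b2 := h2 2
    have c0 := hz 0; have c1 := hz 1
    simp [Fin.sum_univ_succ] at a0 a1 b0 b1 b2
    simp [welfare, Fin.sum_univ_succ]
    omega

lemma ww2 : welfareWithout (![3, 2] : Fin 2 → ℕ) (![2, 2, 1] : Fin 3 → ℕ)
    (![![3, 2, 0], ![1, 0, 1]] : Fin 2 → Fin 3 → ℕ) 2 = 8 := by
  apply natSSup_eq
  · exact ⟨![![2,1,0],![0,0,0]], by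
      constructor <;> intro k <;> fin_cases k <;> simp [Fin.sum_univ_succ],
      by intro i; fin_cases i <;> rfl,
      by simp [welfare, Fin.sum_univ_succ]⟩
  · rintro w ⟨z, ⟨h1, h2⟩, hz, rfl⟩
    have a0 := h1 0; have a1 := h1 1
    have b0 := h2 0; have b1 := h2 1; have b2 := h2 2
    have c0 := hz 0; have c1 := hz 1
    simp [Fin.sum_univ_succ] at a0 a1 b0 b1 b2
    simp [welfare, Fin.sum_univ_succ]
    omega

/-- in the market with objects `{α, β}` (supplies 3, 2), three buyers with
demands 2, 2, 1 and valuations `v α = (3, 2, 0)`, `v β = (1, 0, 1)`, no per-object price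
vector realizes the VCG payments of any welfare-maximizing feasible allocation. -/
theorem no_per_object_vcg_prices :
    ∀ x : Fin 2 → Fin 3 → ℕ,
      Feasible (![3, 2] : Fin 2 → ℕ) (![2, 2, 1] : Fin 3 → ℕ) x →
      (∀ z : Fin 2 → Fin 3 → ℕ,
        Feasible (![3, 2] : Fin 2 → ℕ) (![2, 2, 1] : Fin 3 → ℕ) z →
        welfare (![![3, 2, 0], ![1, 0, 1]] : Fin 2 → Fin 3 → ℕ) z ≤
          welfare (![![3, 2, 0], ![1, 0, 1]] : Fin 2 → Fin 3 → ℕ) x) →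
      ¬ ∃ p : Fin 2 → ℝ, ∀ j : Fin 3,
          (∑ i, p i * (x i j : ℝ)) =
            (welfareWithout (![3, 2] : Fin 2 → ℕ) (![2, 2, 1] : Fin 3 → ℕ)
                (![![3, 2, 0], ![1, 0, 1]] : Fin 2 → Fin 3 → ℕ) j : ℝ) -
              ((welfare (![![3, 2, 0], ![1, 0, 1]] : Fin 2 → Fin 3 → ℕ) x : ℝ) -
                ∑ i, ((![![3, 2, 0], ![1, 0, 1]] : Fin 2 → Fin 3 → ℕ) i j : ℝ) *
                  (x i j : ℝ)) := by
  intro x hfeas hmax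
  rintro ⟨p, hp⟩
  obtain ⟨h1, h2⟩ := hfeas
  have a0 := h1 0; have a1 := h1 1
  have b0 := h2 0; have b1 := h2 1; have b2 := h2 2
  simp [Fin.sum_univ_succ] at a0 a1 b0 b1 b2
  -- welfare x = 9
  have hge : 9 ≤ welfare (![![3, 2, 0], ![1, 0, 1]] : Fin 2 → Fin 3 → ℕ) x := by
    have := hmax ![![2,1,0],![0,0,1]]
      (by constructor <;> intro k <;> fin_cases k <;> simp [Fin.sum_univ_succ])
    simpa [welfare, Fin.sum_univ_succ] using this
  have hW : welfare (![![3, 2, 0], ![1, 0, 1]] : Fin 2 → Fin 3 → ℕ) x = 9 := by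
    simp only [welfare, Fin.sum_univ_succ] at hge ⊢
    simp at hge ⊢
    omega
  -- structure of x
  have hstruct : x 1 2 = 1 ∧ x 0 2 = 0 ∧
      ((x 0 0 = 2 ∧ x 1 0 = 0 ∧ x 0 1 = 1 ∧ x 1 1 ≤ 1) ∨
       (x 0 0 = 1 ∧ x 1 0 = 1 ∧ x 0 1 = 2 ∧ x 1 1 = 0)) := by
    simp only [welfare, Fin.sum_univ_succ] at hW
    simp at hW
    omega
  obtain ⟨e12, e02, hcase⟩ := hstruct
  have q0 := hp 0; have q1 := hp 1; have q2 := hp 2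
  rw [ww0, hW] at q0
  rw [ww1, hW] at q1
  rw [ww2, hW] at q2
  simp [Fin.sum_univ_succ, e12, e02] at q0 q1 q2
  rcases hcase with ⟨e00, e10, e01, e11⟩ | ⟨e00, e10, e01, e11⟩
  · simp only [e00, e10, e01] at q0 q1
    push_cast at q0 q1 q2
    -- q2 : p 1 = ...
    have hp1 : p 1 = 0 := by linarith
    rw [hp1] at q0 q1
    simp at q0 q1
    linarith
  · simp only [e00, e10, e01, e11] at q0 q1
    push_cast at q0 q1 q2
    nlinarith [q0, q1, q2]
end
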